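/- Let K_1, K_2 be convex bodies in ℝ^n, let (q_i)_{i=1}^m be a periodic billiard trajectory on K_1, and suppose that for some a > 0 and x_0 ∈ ℝ^n the polygon (a·q_i + x_0)_{i=1}^m is a periodic billiard trajectory on K_2. Then the vertexwise-sum polygon ((1+a)·q_i + x_0)_{i=1}^m belongs to 𝒫⁺(K_1 + K_2), and its length equals the sum of the lengths of the two trajectories. -/

import Mathlib

open scoped RealInnerProductSpace Pointwise
open Metric

noncomputable section

/-- Euclidean space ℝ^n. -/
abbrev Euc (n : ℕ) := EuclideanSpace ℝ (Fin n)

/-- The image of a closed polygon with vertices `q 0, …, q (m-1)` (indices mod `m`):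
the union of the segments `[q i, q (i+1)]`. -/
def polyImage {n m : ℕ} [NeZero m] (q : Fin m → Euc n) : Set (Euc n) :=
  ⋃ i : Fin m, segment ℝ (q i) (q (i + 1))

/-- The length of a closed polygon: `∑ i, ‖q (i+1) - q i‖`. -/
noncomputable def polyLength {n m : ℕ} [NeZero m] (q : Fin m → Euc n) : ℝ :=
  ∑ i : Fin m, ‖q (i + 1) - q i‖

/-- A convex body: a compact convex set with nonempty interior. -/
def IsConvexBody {n : ℕ} (K : Set (Euc n)) : Prop :=
  IsCompact K ∧ Convex ℝ K ∧ (interior K).Nonempty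

/-- A closed polygon belongs to `𝒫⁺(K)` if no translate of its image is contained
in the interior of `K`. -/
def InPPlus {n m : ℕ} [NeZero m] (K : Set (Euc n)) (q : Fin m → Euc n) : Prop :=
  ∀ x : Euc n, ¬ ((fun p => p + x) '' polyImage q ⊆ interior K)

/-- Unit direction of the `i`-th edge of a closed polygon. -/
noncomputable def dir {n m : ℕ} [NeZero m] (q : Fin m → Euc n) (i : Fin m) : Euc n :=
  ‖q (i + 1) - q i‖⁻¹ • (q (i + 1) - q i)

/-- Outer normal `ν i = u (i-1) - u i` at the `i`-th vertex. -/
noncomputable def normalVec {n m : ℕ} [NeZero m] (q : Fin m → Euc n) (i : Fin m) : Euc n :=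
  dir q (i - 1) - dir q i

/-- A periodic billiard trajectory on a convex body `K`. -/
def IsBilliard {n m : ℕ} [NeZero m] (K : Set (Euc n)) (q : Fin m → Euc n) : Prop :=
  2 ≤ m ∧ (∀ i, q (i + 1) ≠ q i) ∧ (∀ i, q i ∈ K) ∧
    ∀ i, normalVec q i ≠ 0 ∧ ∀ x ∈ K, ⟪x - q i, normalVec q i⟫ ≤ 0

lemma dir_smul_add {n m : ℕ} [NeZero m] (q : Fin m → Euc n) (a : ℝ) (ha : 0 < a)
    (x₀ : Euc n) (i : Fin m) : dir (fun i => a • q i + x₀) i = dir q i := by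
  unfold dir
  have h : (a • q (i+1) + x₀) - (a • q i + x₀) = a • (q (i+1) - q i) := by
    rw [smul_sub]; abel
  simp only [h, norm_smul, Real.norm_eq_abs, abs_of_pos ha, mul_inv, smul_smul]
  congr 1
  rw [mul_comm a⁻¹, mul_assoc, inv_mul_cancel₀ ha.ne', mul_one]

lemma normalVec_smul_add {n m : ℕ} [NeZero m] (q : Fin m → Euc n) (a : ℝ) (ha : 0 < a)
    (x₀ : Euc n) (i : Fin m) : normalVec (fun i => a • q i + x₀) i = normalVec q i := by
  unfold normalVec
  rw [dir_smul_add q a ha, dir_smul_add q a ha]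

theorem stmt15 {n m : ℕ} [NeZero m] (K₁ K₂ : Set (Euc n))
    (hK₁ : IsConvexBody K₁) (hK₂ : IsConvexBody K₂)
    (q : Fin m → Euc n) (a : ℝ) (ha : 0 < a) (x₀ : Euc n)
    (h₁ : IsBilliard K₁ q)
    (h₂ : IsBilliard K₂ (fun i => a • q i + x₀)) :
    InPPlus (K₁ + K₂) (fun i => (1 + a) • q i + x₀) ∧
      polyLength (fun i => (1 + a) • q i + x₀) =
        polyLength q + polyLength (fun i => a • q i + x₀) := by
  constructor
  · intro x hx
    have hmem : ∀ i : Fin m, ((1 + a) • q i + x₀) + x ∈ interior (K₁ + K₂) := by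
      intro i
      apply hx
      exact ⟨(1 + a) • q i + x₀, Set.mem_iUnion.2 ⟨i, left_mem_segment ℝ _ _⟩, rfl⟩
    have key : ∀ i : Fin m, ⟪x, normalVec q i⟫ < 0 := by
      intro i
      obtain ⟨hν, hs1⟩ := h₁.2.2.2 i
      obtain ⟨hν', hs2⟩ := h₂.2.2.2 i
      rw [normalVec_smul_add q a ha] at hs2
      set ν := normalVec q i with hνdef
      obtain ⟨ε, hε, hball⟩ := Metric.isOpen_iff.1 isOpen_interior _ (hmem i)
      have hnν : 0 < ‖ν‖ := norm_pos_iff.2 hν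
      set w : Euc n := ‖ν‖⁻¹ • ν with hw
      have hwnorm : ‖w‖ = 1 := by
        rw [hw, norm_smul, norm_inv, norm_norm, inv_mul_cancel₀ hnν.ne']
      have hp : ((1 + a) • q i + x₀) + x + (ε/2) • w ∈ K₁ + K₂ := by
        apply interior_subset
        apply hball
        simp only [mem_ball, dist_eq_norm]
        have : ((1 + a) • q i + x₀) + x + (ε/2) • w - (((1 + a) • q i + x₀) + x)
            = (ε/2) • w := by abel
        rw [this, norm_smul, hwnorm, mul_one, Real.norm_eq_abs,
          abs_of_pos (by linarith)]
        linarith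
      obtain ⟨y₁, hy₁, y₂, hy₂, hsum⟩ := Set.mem_add.1 hp
      have h1 := hs1 y₁ hy₁
      have h2 := hs2 y₂ hy₂
      have hcomb : ⟪(y₁ - q i) + (y₂ - (a • q i + x₀)), ν⟫ ≤ 0 := by
        rw [inner_add_left]; linarith
      have heq : (y₁ - q i) + (y₂ - (a • q i + x₀)) = x + (ε/2) • w := by
        have : y₁ + y₂ = ((1 + a) • q i + x₀) + x + (ε/2) • w := hsum
        have h1a : (1 + a) • q i = q i + a • q i := by
          rw [add_smul, one_smul]
        rw [h1a] at this
        have := congrArg (fun z => z - (q i + a • q i + x₀)) this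
        calc (y₁ - q i) + (y₂ - (a • q i + x₀)) = y₁ + y₂ - (q i + a • q i + x₀) := by abel
          _ = x + (ε/2) • w := by rw [this]; abel
      rw [heq, inner_add_left] at hcomb
      have hwν : ⟪(ε/2) • w, ν⟫ = (ε/2) * ‖ν‖ := by
        rw [hw, inner_smul_left, inner_smul_left, real_inner_self_eq_norm_sq]
        simp only [RCLike.ofReal_real_eq_id, id_eq, map_div₀, conj_trivial]
        field_simp
      rw [hwν] at hcomb
      nlinarith
    have hzero : ∑ i : Fin m, ⟪x, normalVec q i⟫ = 0 := by
      unfold normalVec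
      simp only [inner_sub_right]
      rw [Finset.sum_sub_distrib]
      have : ∑ i : Fin m, ⟪x, dir q (i - 1)⟫ = ∑ i : Fin m, ⟪x, dir q i⟫ := by
        apply Fintype.sum_equiv (Equiv.subRight (1 : Fin m))
        intro i
        rfl
      rw [this, sub_self]
    have hneg : ∑ i : Fin m, ⟪x, normalVec q i⟫ < 0 :=
      Finset.sum_neg (fun i _ => key i) Finset.univ_nonempty
    linarith
  · unfold polyLength
    rw [← Finset.sum_add_distrib]
    apply Finset.sum_congr rfl
    intro i _
    have h1 : ((1 + a) • q (i+1) + x₀) - ((1 + a) • q i + x₀)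
        = (1 + a) • (q (i+1) - q i) := by rw [smul_sub]; abel
    have h2 : (a • q (i+1) + x₀) - (a • q i + x₀) = a • (q (i+1) - q i) := by
      rw [smul_sub]; abel
    simp only [h1, h2, norm_smul, Real.norm_eq_abs, abs_of_pos ha,
      abs_of_pos (by linarith : (0:ℝ) < 1 + a)]
    ring
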